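/- Let ρ, T_⊥, T_z > 0 and let f(v) = ρ (2π)^{−3/2} (T_⊥² T_z)^{−1/2} exp(−(v_x² + v_y²)/(2T_⊥) − v_z²/(2T_z)) be the anisotropic Gaussian on ℝ³. Then ∫_{ℝ³} ∫_{ℝ³} f(v) f(v_*) v_z q_z q_⊥² dv_* dv = 4 ρ² T_⊥ T_z, where q = v − v_*, q_z is its third component, and q_⊥² = q_x² + q_y². -/

import Mathlib

open MeasureTheory

/-- The anisotropic Gaussian with density `ρ`, transverse temperature `T⊥` and longitudinal
temperature `T_z`. -/
noncomputable def anisoGauss (ρ Tp Tz : ℝ) (v : EuclideanSpace ℝ (Fin 3)) : ℝ :=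
  ρ * (2 * Real.pi) ^ (-(3 : ℝ) / 2) * (Tp ^ 2 * Tz) ^ (-(1 : ℝ) / 2) *
    Real.exp (-((v 0) ^ 2 + (v 1) ^ 2) / (2 * Tp) - (v 2) ^ 2 / (2 * Tz))

open Real Filter

lemma integrable_sq_mul_gauss {b : ℝ} (hb : 0 < b) :
    Integrable fun x : ℝ => x ^ 2 * Real.exp (-b * x ^ 2) := by
  have h := integrable_rpow_mul_exp_neg_mul_sq hb (s := 2) (by norm_num)
  refine h.congr ?_
  filter_upwards with x
  rw [Real.rpow_two]

lemma integral_mul_gauss_eq_zero (b : ℝ) : ∫ x : ℝ, x * Real.exp (-b * x ^ 2) = 0 := by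
  have h := integral_neg_eq_self (fun x : ℝ => x * Real.exp (-b * x ^ 2)) volume
  simp only [neg_sq, neg_mul, integral_neg] at h
  simp only [neg_mul] at h ⊢
  linarith

lemma integral_sq_mul_gauss {b : ℝ} (hb : 0 < b) :
    ∫ x : ℝ, x ^ 2 * Real.exp (-b * x ^ 2) = Real.sqrt (π / b) / (2 * b) := by
  set φ : ℝ → ℝ := fun x => -(x / (2 * b)) * Real.exp (-b * x ^ 2) with hφ
  set f' : ℝ → ℝ := fun x => x ^ 2 * Real.exp (-b * x ^ 2) - (1 / (2 * b)) * Real.exp (-b * x ^ 2)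
    with hf'
  have hderiv : ∀ x : ℝ, HasDerivAt φ (f' x) x := by
    intro x
    have h1 : HasDerivAt (fun x : ℝ => -(x / (2 * b))) (-(1 / (2 * b))) x := by
      simpa using ((hasDerivAt_id x).div_const (2 * b)).fun_neg
    have h0 : HasDerivAt (fun x : ℝ => -b * x ^ 2) (-b * (2 * x)) x := by
      simpa using (hasDerivAt_pow 2 x).const_mul (-b)
    have h2 := h0.exp
    have h3 : HasDerivAt φ (-(1 / (2 * b)) * Real.exp (-b * x ^ 2)
        + -(x / (2 * b)) * (Real.exp (-b * x ^ 2) * (-b * (2 * x)))) x := h1.fun_mul h2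
    convert h3 using 1
    show x ^ 2 * Real.exp (-b * x ^ 2) - (1 / (2 * b)) * Real.exp (-b * x ^ 2) = _
    field_simp
    ring
  have hint : Integrable f' :=
    (integrable_sq_mul_gauss hb).sub ((integrable_exp_neg_mul_sq hb).const_mul _)
  have htop : Tendsto φ atTop (nhds 0) := by
    have h := (rpow_mul_exp_neg_mul_sq_isLittleO_exp_neg hb 1).isBigO
    have h2 : Tendsto (fun x : ℝ => Real.exp (-(1/2) * x)) atTop (nhds 0) := by
      rw [Real.tendsto_exp_comp_nhds_zero]
      exact (tendsto_const_mul_atBot_of_neg (by norm_num)).mpr tendsto_id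
    have h3 := h.trans_tendsto h2
    simp only [Real.rpow_one] at h3
    have h4 := h3.const_mul (-(1 / (2 * b)))
    rw [mul_zero] at h4
    refine h4.congr fun x => ?_
    simp only [hφ]; ring
  have hbot : Tendsto φ atBot (nhds 0) := by
    have h3 : Tendsto (fun x : ℝ => φ (-x)) atTop (nhds 0) := by
      have := htop.neg
      rw [neg_zero] at this
      refine this.congr fun x => ?_
      simp only [hφ, neg_sq]; ring
    have := h3.comp tendsto_neg_atBot_atTop
    simpa [Function.comp_def] using this
  have hIoi : ∫ x in Set.Ioi (0:ℝ), f' x = 0 - φ 0 :=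
    integral_Ioi_of_hasDerivAt_of_tendsto' (fun x _ => hderiv x) hint.integrableOn htop
  have hIic : ∫ x in Set.Iic (0:ℝ), f' x = φ 0 - 0 :=
    integral_Iic_of_hasDerivAt_of_tendsto' (fun x _ => hderiv x) hint.integrableOn hbot
  have hsum : ∫ x : ℝ, f' x = 0 := by
    rw [← intervalIntegral.integral_Iic_add_Ioi hint.integrableOn hint.integrableOn, hIoi, hIic]
    ring
  rw [hf'] at hsum
  rw [integral_sub (integrable_sq_mul_gauss hb) ((integrable_exp_neg_mul_sq hb).const_mul _),
    integral_const_mul, integral_gaussian] at hsum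
  have hb' : (2 : ℝ) * b ≠ 0 := by positivity
  field_simp at hsum ⊢
  rw [show (fun a : ℝ => a ^ 2 * rexp (-(a ^ 2 * b))) = fun x => x ^ 2 * rexp (-(b * x ^ 2))
    from funext fun x => by rw [mul_comm (x ^ 2) b]] at hsum
  linarith

lemma integral_euclidean3 (f g h : ℝ → ℝ) :
    ∫ v : EuclideanSpace ℝ (Fin 3), f (v 0) * g (v 1) * h (v 2)
      = (∫ x, f x) * (∫ x, g x) * (∫ x, h x) := by
  rw [← ((EuclideanSpace.volume_preserving_symm_measurableEquiv_toLp (Fin 3)).symm).integral_comp'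
    (fun v : EuclideanSpace ℝ (Fin 3) => f (v 0) * g (v 1) * h (v 2))]
  have h1 : ∫ x : Fin 3 → ℝ, ∏ i, ![f, g, h] i (x i) = ∏ i, ∫ x : ℝ, ![f, g, h] i x :=
    integral_fintype_prod_eq_prod (ι := Fin 3) ![f, g, h]
  simp only [Fin.prod_univ_three] at h1
  simpa [Matrix.cons_val_zero, Matrix.cons_val_one] using h1

lemma integrable_euclidean3 {f g h : ℝ → ℝ} (hf : Integrable f) (hg : Integrable g)
    (hh : Integrable h) :
    Integrable fun v : EuclideanSpace ℝ (Fin 3) => f (v 0) * g (v 1) * h (v 2) := by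
  have hmp := MeasurePreserving.symm (MeasurableEquiv.toLp 2 (Fin 3 → ℝ)).symm
    (EuclideanSpace.volume_preserving_symm_measurableEquiv_toLp (Fin 3))
  rw [← hmp.integrable_comp_emb (MeasurableEquiv.measurableEmbedding _)]
  have h1 : Integrable fun x : Fin 3 → ℝ => ∏ i, ![f, g, h] i (x i) :=
    Integrable.fintype_prod (fun i => by fin_cases i <;> simpa)
  simp only [Fin.prod_univ_three] at h1
  simpa [Function.comp_def] using h1

lemma gauss_form (T : ℝ) (x : ℝ) : Real.exp (-x ^ 2 / (2 * T)) = Real.exp (-(2 * T)⁻¹ * x ^ 2) := by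
  congr 1; ring

section TForm
variable {T : ℝ} (hT : 0 < T)
include hT

lemma integrable_gT : Integrable fun x : ℝ => Real.exp (-x ^ 2 / (2 * T)) := by
  simp only [gauss_form]
  exact integrable_exp_neg_mul_sq (by positivity)

lemma integrable_x_gT : Integrable fun x : ℝ => x * Real.exp (-x ^ 2 / (2 * T)) := by
  simp only [gauss_form]
  exact integrable_mul_exp_neg_mul_sq (by positivity)

lemma integrable_sq_gT : Integrable fun x : ℝ => x ^ 2 * Real.exp (-x ^ 2 / (2 * T)) := by
  simp only [gauss_form]
  exact integrable_sq_mul_gauss (by positivity)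

lemma integral_gT : ∫ x : ℝ, Real.exp (-x ^ 2 / (2 * T)) = Real.sqrt (2 * π * T) := by
  simp only [gauss_form]
  rw [integral_gaussian, show π / (2 * T)⁻¹ = 2 * π * T by field_simp]

lemma integral_x_gT : ∫ x : ℝ, x * Real.exp (-x ^ 2 / (2 * T)) = 0 := by
  simp only [gauss_form]
  exact integral_mul_gauss_eq_zero _

lemma integral_sq_gT : ∫ x : ℝ, x ^ 2 * Real.exp (-x ^ 2 / (2 * T)) = T * Real.sqrt (2 * π * T) := by
  simp only [gauss_form]
  rw [integral_sq_mul_gauss (by positivity),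
    show π / (2 * T)⁻¹ = 2 * π * T by field_simp,
    show 2 * (2 * T)⁻¹ = T⁻¹ by field_simp, div_eq_mul_inv, inv_inv]
  ring

lemma integrable_sub_gT (a : ℝ) :
    Integrable fun x : ℝ => (a - x) * Real.exp (-x ^ 2 / (2 * T)) := by
  refine (((integrable_gT hT).const_mul a).sub (integrable_x_gT hT)).congr ?_
  filter_upwards with x; simp only [Pi.sub_apply]; ring

lemma integrable_sub_sq_gT (a : ℝ) :
    Integrable fun x : ℝ => (a - x) ^ 2 * Real.exp (-x ^ 2 / (2 * T)) := by
  refine ((((integrable_gT hT).const_mul (a ^ 2)).sub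
    ((integrable_x_gT hT).const_mul (2 * a))).add (integrable_sq_gT hT)).congr ?_
  filter_upwards with x; simp only [Pi.add_apply, Pi.sub_apply]; ring

lemma integral_sub_gT (a : ℝ) :
    ∫ x : ℝ, (a - x) * Real.exp (-x ^ 2 / (2 * T)) = a * Real.sqrt (2 * π * T) := by
  rw [show (fun x : ℝ => (a - x) * Real.exp (-x ^ 2 / (2 * T)))
      = fun x : ℝ => a * Real.exp (-x ^ 2 / (2 * T)) - x * Real.exp (-x ^ 2 / (2 * T))
    from funext fun x => by ring]
  rw [integral_sub ((integrable_gT hT).const_mul a) (integrable_x_gT hT),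
    integral_const_mul, integral_gT hT, integral_x_gT hT]
  ring

lemma integral_sub_sq_gT (a : ℝ) :
    ∫ x : ℝ, (a - x) ^ 2 * Real.exp (-x ^ 2 / (2 * T))
      = (a ^ 2 + T) * Real.sqrt (2 * π * T) := by
  rw [show (fun x : ℝ => (a - x) ^ 2 * Real.exp (-x ^ 2 / (2 * T)))
      = fun x : ℝ => (a ^ 2 * Real.exp (-x ^ 2 / (2 * T))
          - 2 * a * (x * Real.exp (-x ^ 2 / (2 * T))))
          + x ^ 2 * Real.exp (-x ^ 2 / (2 * T))
    from funext fun x => by ring]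
  have hA : Integrable fun x : ℝ => a ^ 2 * Real.exp (-x ^ 2 / (2 * T))
      - 2 * a * (x * Real.exp (-x ^ 2 / (2 * T))) := by
    refine (((integrable_gT hT).const_mul (a ^ 2)).sub
      ((integrable_x_gT hT).const_mul (2 * a))).congr ?_
    filter_upwards with x; simp only [Pi.sub_apply]
    try ring
  rw [integral_add hA (integrable_sq_gT hT),
    integral_sub ((integrable_gT hT).const_mul _) ((integrable_x_gT hT).const_mul _),
    integral_const_mul, integral_const_mul, integral_gT hT, integral_x_gT hT, integral_sq_gT hT]
  ring

end TForm

lemma knorm {ρ Tp Tz : ℝ} (hρ : 0 < ρ) (hTp : 0 < Tp) (hTz : 0 < Tz) :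
    ρ * (2 * π) ^ (-(3 : ℝ) / 2) * (Tp ^ 2 * Tz) ^ (-(1 : ℝ) / 2) *
      (Real.sqrt (2 * π * Tp) * Real.sqrt (2 * π * Tp) * Real.sqrt (2 * π * Tz)) = ρ := by
  have h2π : (0 : ℝ) < 2 * π := by positivity
  have e1 : ((2 : ℝ) * π) ^ (-(3 : ℝ) / 2) = (Real.sqrt (2 * π) ^ 3)⁻¹ := by
    rw [show (-(3 : ℝ) / 2) = -(3 / 2) by ring, Real.rpow_neg h2π.le]
    congr 1
    rw [show ((3 : ℝ) / 2) = (1 / 2) * (3 : ℕ) by norm_num, Real.rpow_mul h2π.le,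
      Real.rpow_natCast, ← Real.sqrt_eq_rpow]
  have e2 : (Tp ^ 2 * Tz) ^ (-(1 : ℝ) / 2) = (Tp * Real.sqrt Tz)⁻¹ := by
    rw [show (-(1 : ℝ) / 2) = -(1 / 2) by ring, Real.rpow_neg (by positivity)]
    congr 1
    rw [show ((1 : ℝ) / 2) = (1 / 2 : ℝ) by norm_num, ← Real.sqrt_eq_rpow,
      Real.sqrt_mul (by positivity), Real.sqrt_sq hTp.le]
  have e3 : Real.sqrt (2 * π * Tp) = Real.sqrt (2 * π) * Real.sqrt Tp :=
    Real.sqrt_mul h2π.le _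
  have e4 : Real.sqrt (2 * π * Tz) = Real.sqrt (2 * π) * Real.sqrt Tz :=
    Real.sqrt_mul h2π.le _
  have hsp : Real.sqrt Tp * Real.sqrt Tp = Tp := Real.mul_self_sqrt hTp.le
  have hs2π : (0 : ℝ) < Real.sqrt (2 * π) := Real.sqrt_pos.mpr h2π
  have hsz : (0 : ℝ) < Real.sqrt Tz := Real.sqrt_pos.mpr hTz
  rw [e1, e2, e3, e4,
    show (Real.sqrt (2*π) * Real.sqrt Tp) * (Real.sqrt (2*π) * Real.sqrt Tp)
        * (Real.sqrt (2*π) * Real.sqrt Tz)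
      = Real.sqrt (2*π) ^ 3 * (Real.sqrt Tp * Real.sqrt Tp) * Real.sqrt Tz by ring, hsp]
  field_simp

lemma anisoGauss_factor (ρ Tp Tz : ℝ) (v : EuclideanSpace ℝ (Fin 3)) :
    anisoGauss ρ Tp Tz v
      = ρ * (2 * Real.pi) ^ (-(3 : ℝ) / 2) * (Tp ^ 2 * Tz) ^ (-(1 : ℝ) / 2) *
        (Real.exp (-(v 0) ^ 2 / (2 * Tp)) * Real.exp (-(v 1) ^ 2 / (2 * Tp)) *
          Real.exp (-(v 2) ^ 2 / (2 * Tz))) := by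
  unfold anisoGauss
  rw [show -((v 0) ^ 2 + (v 1) ^ 2) / (2 * Tp) - (v 2) ^ 2 / (2 * Tz)
      = (-(v 0) ^ 2 / (2 * Tp) + -(v 1) ^ 2 / (2 * Tp)) + -(v 2) ^ 2 / (2 * Tz) by ring,
    Real.exp_add, Real.exp_add]

lemma aniso_prod (ρ Tp Tz : ℝ) (p q r : ℝ → ℝ) :
    ∫ v : EuclideanSpace ℝ (Fin 3), anisoGauss ρ Tp Tz v * (p (v 0) * q (v 1) * r (v 2))
      = ρ * (2 * Real.pi) ^ (-(3 : ℝ) / 2) * (Tp ^ 2 * Tz) ^ (-(1 : ℝ) / 2) *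
        ((∫ x : ℝ, p x * Real.exp (-x ^ 2 / (2 * Tp)))
          * (∫ x : ℝ, q x * Real.exp (-x ^ 2 / (2 * Tp)))
          * (∫ x : ℝ, r x * Real.exp (-x ^ 2 / (2 * Tz)))) := by
  have h : (fun v : EuclideanSpace ℝ (Fin 3) =>
        anisoGauss ρ Tp Tz v * (p (v 0) * q (v 1) * r (v 2)))
      = fun v => (fun x => ρ * (2 * Real.pi) ^ (-(3 : ℝ) / 2) * (Tp ^ 2 * Tz) ^ (-(1 : ℝ) / 2)
            * (p x * Real.exp (-x ^ 2 / (2 * Tp)))) (v 0)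
          * (fun x => q x * Real.exp (-x ^ 2 / (2 * Tp))) (v 1)
          * (fun x => r x * Real.exp (-x ^ 2 / (2 * Tz))) (v 2) :=
    funext fun v => by rw [anisoGauss_factor]; ring
  rw [h, integral_euclidean3
      (fun x => ρ * (2 * Real.pi) ^ (-(3 : ℝ) / 2) * (Tp ^ 2 * Tz) ^ (-(1 : ℝ) / 2)
        * (p x * Real.exp (-x ^ 2 / (2 * Tp))))
      (fun x => q x * Real.exp (-x ^ 2 / (2 * Tp)))
      (fun x => r x * Real.exp (-x ^ 2 / (2 * Tz))), integral_const_mul]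
  ring

lemma aniso_prod_integrable (ρ Tp Tz : ℝ) {p q r : ℝ → ℝ}
    (hp : Integrable fun x : ℝ => p x * Real.exp (-x ^ 2 / (2 * Tp)))
    (hq : Integrable fun x : ℝ => q x * Real.exp (-x ^ 2 / (2 * Tp)))
    (hr : Integrable fun x : ℝ => r x * Real.exp (-x ^ 2 / (2 * Tz))) :
    Integrable fun v : EuclideanSpace ℝ (Fin 3) =>
      anisoGauss ρ Tp Tz v * (p (v 0) * q (v 1) * r (v 2)) := by
  have h : (fun v : EuclideanSpace ℝ (Fin 3) =>
        anisoGauss ρ Tp Tz v * (p (v 0) * q (v 1) * r (v 2)))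
      = fun v => (fun x => ρ * (2 * Real.pi) ^ (-(3 : ℝ) / 2) * (Tp ^ 2 * Tz) ^ (-(1 : ℝ) / 2)
            * (p x * Real.exp (-x ^ 2 / (2 * Tp)))) (v 0)
          * (fun x => q x * Real.exp (-x ^ 2 / (2 * Tp))) (v 1)
          * (fun x => r x * Real.exp (-x ^ 2 / (2 * Tz))) (v 2) :=
    funext fun v => by rw [anisoGauss_factor]; ring
  rw [h]
  exact integrable_euclidean3 (hp.const_mul _) hq hr

/-- The key Trubnikov double integral for the anisotropic Gaussian:
`∫∫ f(v) f(v_*) v_z q_z q_⊥² dv_* dv = 4 ρ² T_⊥ T_z`. -/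
theorem anisoGauss_trubnikov_integral (ρ Tp Tz : ℝ) (hρ : 0 < ρ) (hTp : 0 < Tp)
    (hTz : 0 < Tz) :
    (∫ v : EuclideanSpace ℝ (Fin 3), ∫ w : EuclideanSpace ℝ (Fin 3),
        anisoGauss ρ Tp Tz v * anisoGauss ρ Tp Tz w * (v 2) * ((v 2) - (w 2)) *
          (((v 0) - (w 0)) ^ 2 + ((v 1) - (w 1)) ^ 2)) =
      4 * ρ ^ 2 * Tp * Tz := by
  have hK := knorm hρ hTp hTz
  have hone : Integrable fun x : ℝ => (1 : ℝ) * Real.exp (-x ^ 2 / (2 * Tp)) := by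
    simpa using integrable_gT hTp
  have hinner : ∀ v : EuclideanSpace ℝ (Fin 3),
      (∫ w : EuclideanSpace ℝ (Fin 3),
          anisoGauss ρ Tp Tz v * anisoGauss ρ Tp Tz w * (v 2) * ((v 2) - (w 2)) *
            (((v 0) - (w 0)) ^ 2 + ((v 1) - (w 1)) ^ 2))
        = anisoGauss ρ Tp Tz v * (v 2) *
            (ρ * (((v 0) ^ 2 + (v 1) ^ 2 + 2 * Tp) * (v 2))) := by
    intro v
    have hval1 : ∫ w : EuclideanSpace ℝ (Fin 3),
        anisoGauss ρ Tp Tz w * ((v 0 - w 0) ^ 2 * (v 2 - w 2))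
        = ρ * (((v 0) ^ 2 + Tp) * (v 2)) := by
      have h1 := aniso_prod ρ Tp Tz (fun x => (v 0 - x) ^ 2) (fun _ => (1 : ℝ))
        (fun x => v 2 - x)
      simp only [one_mul, mul_one] at h1
      rw [integral_sub_sq_gT hTp, integral_gT hTp, integral_sub_gT hTz] at h1
      rw [h1]
      linear_combination (((v 0) ^ 2 + Tp) * (v 2)) * hK
    have hval2 : ∫ w : EuclideanSpace ℝ (Fin 3),
        anisoGauss ρ Tp Tz w * ((v 1 - w 1) ^ 2 * (v 2 - w 2))
        = ρ * (((v 1) ^ 2 + Tp) * (v 2)) := by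
      have h1 := aniso_prod ρ Tp Tz (fun _ => (1 : ℝ)) (fun x => (v 1 - x) ^ 2)
        (fun x => v 2 - x)
      simp only [one_mul, mul_one] at h1
      rw [integral_sub_sq_gT hTp, integral_gT hTp, integral_sub_gT hTz] at h1
      rw [h1]
      linear_combination (((v 1) ^ 2 + Tp) * (v 2)) * hK
    have hi1 : Integrable fun w : EuclideanSpace ℝ (Fin 3) =>
        anisoGauss ρ Tp Tz w * ((v 0 - w 0) ^ 2 * (v 2 - w 2)) := by
      simpa using aniso_prod_integrable ρ Tp Tz (integrable_sub_sq_gT hTp (v 0)) hone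
        (integrable_sub_gT hTz (v 2))
    have hi2 : Integrable fun w : EuclideanSpace ℝ (Fin 3) =>
        anisoGauss ρ Tp Tz w * ((v 1 - w 1) ^ 2 * (v 2 - w 2)) := by
      simpa using aniso_prod_integrable ρ Tp Tz hone (integrable_sub_sq_gT hTp (v 1))
        (integrable_sub_gT hTz (v 2))
    rw [show (fun w : EuclideanSpace ℝ (Fin 3) =>
          anisoGauss ρ Tp Tz v * anisoGauss ρ Tp Tz w * (v 2) * ((v 2) - (w 2)) *
            (((v 0) - (w 0)) ^ 2 + ((v 1) - (w 1)) ^ 2))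
        = fun w => (anisoGauss ρ Tp Tz v * (v 2)) *
            (anisoGauss ρ Tp Tz w * ((v 0 - w 0) ^ 2 * (v 2 - w 2))
              + anisoGauss ρ Tp Tz w * ((v 1 - w 1) ^ 2 * (v 2 - w 2)))
      from funext fun w => by ring]
    rw [integral_const_mul, integral_add hi1 hi2, hval1, hval2]
    ring
  simp only [hinner]
  have hsqone : Integrable fun x : ℝ => (1 : ℝ) * Real.exp (-x ^ 2 / (2 * Tz)) := by
    simpa using integrable_gT hTz
  have hI1 : Integrable fun v : EuclideanSpace ℝ (Fin 3) =>
      anisoGauss ρ Tp Tz v * ((v 0) ^ 2 * (v 2) ^ 2) := by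
    simpa using aniso_prod_integrable ρ Tp Tz (integrable_sq_gT hTp) hone
      (integrable_sq_gT hTz)
  have hI2 : Integrable fun v : EuclideanSpace ℝ (Fin 3) =>
      anisoGauss ρ Tp Tz v * ((v 1) ^ 2 * (v 2) ^ 2) := by
    simpa using aniso_prod_integrable ρ Tp Tz hone (integrable_sq_gT hTp)
      (integrable_sq_gT hTz)
  have hI3 : Integrable fun v : EuclideanSpace ℝ (Fin 3) =>
      anisoGauss ρ Tp Tz v * (v 2) ^ 2 := by
    simpa using aniso_prod_integrable ρ Tp Tz hone hone (integrable_sq_gT hTz)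
  have hu1 : ∫ v : EuclideanSpace ℝ (Fin 3),
      anisoGauss ρ Tp Tz v * ((v 0) ^ 2 * (v 2) ^ 2) = ρ * (Tp * Tz) := by
    have h1 := aniso_prod ρ Tp Tz (fun x => x ^ 2) (fun _ => (1 : ℝ)) (fun x => x ^ 2)
    simp only [one_mul, mul_one] at h1
    rw [integral_sq_gT hTp, integral_gT hTp, integral_sq_gT hTz] at h1
    rw [h1]
    linear_combination (Tp * Tz) * hK
  have hu2 : ∫ v : EuclideanSpace ℝ (Fin 3),
      anisoGauss ρ Tp Tz v * ((v 1) ^ 2 * (v 2) ^ 2) = ρ * (Tp * Tz) := by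
    have h1 := aniso_prod ρ Tp Tz (fun _ => (1 : ℝ)) (fun x => x ^ 2) (fun x => x ^ 2)
    simp only [one_mul, mul_one] at h1
    rw [integral_sq_gT hTp, integral_gT hTp, integral_sq_gT hTz] at h1
    rw [h1]
    linear_combination (Tp * Tz) * hK
  have hu3 : ∫ v : EuclideanSpace ℝ (Fin 3),
      anisoGauss ρ Tp Tz v * (v 2) ^ 2 = ρ * Tz := by
    have h1 := aniso_prod ρ Tp Tz (fun _ => (1 : ℝ)) (fun _ => (1 : ℝ)) (fun x => x ^ 2)
    simp only [one_mul, mul_one] at h1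
    rw [integral_gT hTp, integral_sq_gT hTz] at h1
    rw [h1]
    linear_combination Tz * hK
  rw [show (fun v : EuclideanSpace ℝ (Fin 3) =>
        anisoGauss ρ Tp Tz v * (v 2) *
          (ρ * (((v 0) ^ 2 + (v 1) ^ 2 + 2 * Tp) * (v 2))))
      = fun v => ρ * (anisoGauss ρ Tp Tz v * ((v 0) ^ 2 * (v 2) ^ 2))
          + (ρ * (anisoGauss ρ Tp Tz v * ((v 1) ^ 2 * (v 2) ^ 2))
            + (2 * ρ * Tp) * (anisoGauss ρ Tp Tz v * (v 2) ^ 2))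
    from funext fun v => by ring]
  have hB : Integrable (fun v : EuclideanSpace ℝ (Fin 3) =>
      ρ * (anisoGauss ρ Tp Tz v * ((v 1) ^ 2 * (v 2) ^ 2))
        + (2 * ρ * Tp) * (anisoGauss ρ Tp Tz v * (v 2) ^ 2)) :=
    ((hI2.const_mul ρ).add (hI3.const_mul (2 * ρ * Tp))).congr
      (Filter.Eventually.of_forall fun v => rfl)
  rw [integral_add (hI1.const_mul ρ) hB,
    integral_add (hI2.const_mul ρ) (hI3.const_mul (2 * ρ * Tp)),
    integral_const_mul, integral_const_mul, integral_const_mul, hu1, hu2, hu3]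
  ring
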